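/- Let f be the density of N(μ, σ²), let s be a real number with |s − μ| ≤ 6σ, and let ρ ≥ 6 + sqrt(2·ln(2√n)) for some n ≥ 1. Then |∫_{−∞}^{s − ρσ} (x − μ)·f(x) dx| ≤ σ/√n. -/

import Mathlib

open MeasureTheory

/-- Truncation-bias bound for the Gaussian density: with |s − μ| ≤ 6σ and
ρ ≥ 6 + sqrt(2·ln(2√n)), the lower-tail first-moment integral is at most σ/√n. -/
theorem gaussian_truncation_bias (μ σ s ρ : ℝ) (n : ℝ) (hσ : 0 < σ) (hn : 1 ≤ n)
    (hs : |s - μ| ≤ 6 * σ) (hρ : ρ ≥ 6 + Real.sqrt (2 * Real.log (2 * Real.sqrt n))) :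
    |∫ x in Set.Iic (s - ρ * σ),
        (x - μ) * (1 / (σ * Real.sqrt (2 * Real.pi)) * Real.exp (-(x - μ) ^ 2 / (2 * σ ^ 2)))|
      ≤ σ / Real.sqrt n := by
  have hπ : 0 < Real.sqrt (2 * Real.pi) := Real.sqrt_pos.mpr (by positivity)
  set a := s - ρ * σ with ha
  set F : ℝ → ℝ := fun x => -(σ / Real.sqrt (2 * Real.pi)) * Real.exp (-(x - μ) ^ 2 / (2 * σ ^ 2))
    with hF
  have hderiv : ∀ x ∈ Set.Iic a, HasDerivAt F
      ((x - μ) * (1 / (σ * Real.sqrt (2 * Real.pi)) * Real.exp (-(x - μ) ^ 2 / (2 * σ ^ 2)))) x := by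
    intro x _
    have h1 : HasDerivAt (fun x : ℝ => -(x - μ) ^ 2 / (2 * σ ^ 2)) (-(x - μ) / σ ^ 2) x := by
      have h0 : HasDerivAt (fun x : ℝ => x - μ) 1 x := (hasDerivAt_id x).sub_const μ
      have : HasDerivAt (fun x : ℝ => -(x - μ) ^ 2 / (2 * σ ^ 2)) _ x := ((h0.pow 2).neg.div_const (2 * σ ^ 2))
      convert this using 1
      ring
    have h2 : HasDerivAt F _ x := (h1.exp).const_mul (-(σ / Real.sqrt (2 * Real.pi)))
    convert h2 using 1
    field_simp
  have hint : IntegrableOn (fun x =>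
      (x - μ) * (1 / (σ * Real.sqrt (2 * Real.pi)) * Real.exp (-(x - μ) ^ 2 / (2 * σ ^ 2))))
      (Set.Iic a) := by
    have hb : (0:ℝ) < 1 / (2 * σ ^ 2) := by positivity
    have h := (((integrable_mul_exp_neg_mul_sq hb).const_mul
      (1 / (σ * Real.sqrt (2 * Real.pi)))).comp_sub_right μ)
    apply Integrable.integrableOn
    convert h using 2 with x
    rw [neg_div]
    ring_nf
  have htends : Filter.Tendsto F Filter.atBot (nhds 0) := by
    have hsq : Filter.Tendsto (fun x : ℝ => (x - μ) ^ 2) Filter.atBot Filter.atTop := by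
      have h1 : Filter.Tendsto (fun x : ℝ => μ - x) Filter.atBot Filter.atTop := by
        simpa [sub_eq_add_neg] using Filter.tendsto_atTop_add_const_left Filter.atBot μ
          Filter.tendsto_neg_atBot_atTop
      have h2 := (Filter.tendsto_pow_atTop (two_ne_zero)).comp h1
      refine h2.congr fun x => ?_
      simp [Function.comp]; ring
    have hg : Filter.Tendsto (fun x : ℝ => -(x - μ) ^ 2 / (2 * σ ^ 2)) Filter.atBot
        Filter.atBot := by
      apply Filter.Tendsto.atBot_div_const (by positivity)
      exact Filter.tendsto_neg_atTop_atBot.comp hsq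
    have h3 := (Real.tendsto_exp_atBot.comp hg).const_mul (-(σ / Real.sqrt (2 * Real.pi)))
    rw [mul_zero] at h3
    exact h3
  rw [integral_Iic_of_hasDerivAt_of_tendsto' hderiv hint htends, sub_zero, hF]
  rw [abs_mul, abs_neg, abs_of_nonneg (by positivity : (0:ℝ) ≤ σ / Real.sqrt (2 * Real.pi)),
    Real.abs_exp]
  -- Now bound (σ/√(2π)) · exp(-(a-μ)²/(2σ²)) ≤ σ/√n
  have hn0 : (0:ℝ) < Real.sqrt n := Real.sqrt_pos.mpr (by linarith)
  set t := Real.sqrt (2 * Real.log (2 * Real.sqrt n)) with ht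
  have htnn : 0 ≤ t := Real.sqrt_nonneg _
  have hlog : 0 ≤ Real.log (2 * Real.sqrt n) := by
    apply Real.log_nonneg
    nlinarith [Real.one_le_sqrt.mpr hn]
  have ht2 : t ^ 2 = 2 * Real.log (2 * Real.sqrt n) := Real.sq_sqrt (by linarith)
  have haμ : a - μ ≤ -(t * σ) := by
    have := abs_le.mp hs
    nlinarith
  have hsq : t ^ 2 * σ ^ 2 ≤ (a - μ) ^ 2 := by nlinarith [mul_nonneg htnn hσ.le]
  have hexp : Real.exp (-(a - μ) ^ 2 / (2 * σ ^ 2)) ≤ 1 / (2 * Real.sqrt n) := by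
    have h1 : -(a - μ) ^ 2 / (2 * σ ^ 2) ≤ -Real.log (2 * Real.sqrt n) := by
      rw [div_le_iff₀ (by positivity)]
      nlinarith
    calc Real.exp (-(a - μ) ^ 2 / (2 * σ ^ 2)) ≤ Real.exp (-Real.log (2 * Real.sqrt n)) :=
          Real.exp_le_exp.mpr h1
      _ = 1 / (2 * Real.sqrt n) := by
          rw [Real.exp_neg, Real.exp_log (by positivity)]; rw [one_div]
  have hπ1 : 1 ≤ Real.sqrt (2 * Real.pi) := by
    rw [show (1:ℝ) = Real.sqrt 1 by simp]
    exact Real.sqrt_le_sqrt (by nlinarith [Real.pi_gt_three])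
  calc σ / Real.sqrt (2 * Real.pi) * Real.exp (-(a - μ) ^ 2 / (2 * σ ^ 2))
      ≤ σ / Real.sqrt (2 * Real.pi) * (1 / (2 * Real.sqrt n)) :=
        mul_le_mul_of_nonneg_left hexp (by positivity)
    _ ≤ σ / Real.sqrt n := by
        rw [div_mul_eq_mul_div, mul_one_div, div_div, div_le_div_iff₀ (by positivity) hn0]
        nlinarith [mul_le_mul_of_nonneg_left hπ1
          (mul_nonneg (mul_nonneg hσ.le (by norm_num : (0:ℝ) ≤ 2)) hn0.le),
          mul_pos hσ hn0]
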